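/- Let T > 0, η > 0, β > 0. Set β̄ = (1 + β/2)⁻¹, c₁ = exp(-T²/2), c_η = exp(-(1+η²)T²/2), J_ODE = -1 - (1 - β̄·(c₁ - 1)/(c_η - 1))², and J_REF = -2. Then the improvement of fine-tuning satisfies J_ODE - J_REF ≥ 1 - (1 - β̄)² - exp(-T²/2)/2 - exp(-T²). -/

import Mathlib

private lemma vp_key (b d c : ℝ) (hb0 : 0 < b) (hb1 : b < 1) (hd0 : 0 ≤ d)
    (hdc : d ≤ c) (hc0 : 0 < c) :
    (1 - b * (1 - d)) ^ 2 ≤ (1 - b) ^ 2 + c / 2 + c * c := by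
  nlinarith [mul_nonneg hd0 (sq_nonneg (2 * b - 1)),
    mul_le_mul hdc hdc hd0 hc0.le,
    mul_nonneg (mul_nonneg hd0 hd0) (show (0:ℝ) ≤ 1 - b ^ 2 by nlinarith)]

/-- Explicit non-asymptotic improvement lower bound for the VP model (Theorem 3.2). -/
theorem vp_improvement_bound (T η β : ℝ) (hT : 0 < T) (hη : 0 < η) (hβ : 0 < β) :
    let β' : ℝ := (1 + β / 2)⁻¹
    let c₁ : ℝ := Real.exp (-T ^ 2 / 2)
    let cη : ℝ := Real.exp (-(1 + η ^ 2) * T ^ 2 / 2)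
    let JODE : ℝ := -1 - (1 - β' * (c₁ - 1) / (cη - 1)) ^ 2
    let JREF : ℝ := -2
    JODE - JREF ≥ 1 - (1 - β') ^ 2 - Real.exp (-T ^ 2 / 2) / 2 - Real.exp (-T ^ 2) := by
  intro β' c₁ cη JODE JREF
  have hT2 : 0 < T ^ 2 := by positivity
  have hc₁0 : 0 < c₁ := Real.exp_pos _
  have hc₁1 : c₁ < 1 := by
    apply Real.exp_lt_one_iff.mpr; nlinarith
  have hcη0 : 0 < cη := Real.exp_pos _
  have hcηc₁ : cη < c₁ := by
    apply Real.exp_lt_exp.mpr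
    have h : 0 < η ^ 2 * T ^ 2 := by positivity
    nlinarith
  have hcη1 : cη < 1 := lt_trans hcηc₁ hc₁1
  have hβ'0 : 0 < β' := by positivity
  have hβ'1 : β' < 1 := by
    rw [inv_lt_one_iff₀]; right; nlinarith
  have hden : (0:ℝ) < 1 - cη := by linarith
  set ρ : ℝ := (c₁ - 1) / (cη - 1) with hρdef
  have hρeq : ρ = (1 - c₁) / (1 - cη) := by
    rw [hρdef]; rw [div_eq_div_iff (by linarith) (by linarith)]; ring
  set δ : ℝ := 1 - ρ with hδdef
  have hδ0 : 0 ≤ δ := by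
    have h : ρ ≤ 1 := by
      rw [hρeq, div_le_one hden]; linarith
    linarith
  have hδc₁ : δ ≤ c₁ := by
    have h1 : δ = (c₁ - cη) / (1 - cη) := by
      rw [hδdef, hρeq]; field_simp; ring
    rw [h1, div_le_iff₀ hden]
    nlinarith
  have hexp : Real.exp (-T ^ 2) = c₁ * c₁ := by
    rw [show c₁ = Real.exp (-T ^ 2 / 2) from rfl, ← Real.exp_add]; ring_nf
  have hmul : β' * (c₁ - 1) / (cη - 1) = β' * ρ := by
    rw [hρdef]; ring
  show -1 - (1 - β' * (c₁ - 1) / (cη - 1)) ^ 2 - (-2) ≥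
      1 - (1 - β') ^ 2 - Real.exp (-T ^ 2 / 2) / 2 - Real.exp (-T ^ 2)
  rw [hmul, hexp]
  have hρ : ρ = 1 - δ := by rw [hδdef]; ring
  rw [hρ]
  have := vp_key β' δ c₁ hβ'0 hβ'1 hδ0 hδc₁ hc₁0
  show -1 - (1 - β' * (1 - δ)) ^ 2 - (-2) ≥ 1 - (1 - β') ^ 2 - c₁ / 2 - c₁ * c₁
  linarith
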